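/- Let Q be a finite loop, N a normal subloop of Q with |N| = k, and let a₁N, …, a_kN ∈ P(Q/N). Then P(Q) intersects the coset product a₁N · a₂N ⋯ a_kN (under the association used); in particular P(Q) intersects every element of P(Q/N)^k. -/

import Mathlib

/-- A loop: a magma with two-sided identity in which all left and right
translations are bijections. -/
class Loop (Q : Type*) extends Mul Q, One Q where
  one_mul : ∀ a : Q, 1 * a = a
  mul_one : ∀ a : Q, a * 1 = a
  mulLeft_bijective : ∀ a : Q, Function.Bijective fun x : Q => a * x
  mulRight_bijective : ∀ a : Q, Function.Bijective fun x : Q => x * a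

/-- `IsProdOf s x` means `x` can be written as a product, under some ordering
and association, whose multiset of factors is exactly `s`. -/
inductive IsProdOf {Q : Type*} [Mul Q] : Multiset Q → Q → Prop
  | single (a : Q) : IsProdOf {a} a
  | mul {s t : Multiset Q} {a b : Q} :
      IsProdOf s a → IsProdOf t b → IsProdOf (s + t) (a * b)

/-- `fullProds Q k` is `P^k(Q)`: elements expressible as a product (in some
order and association) containing each element of `Q` exactly `k` times. -/
def fullProds (Q : Type*) [Mul Q] [Fintype Q] (k : ℕ) : Set Q :=
  {x | IsProdOf (k • (Finset.univ : Finset Q).val) x}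

/-- The smallest congruence on `Q` whose quotient is a group; its class of `1`
is the associator subloop `A(Q)`, and its classes are the cosets of `A(Q)`. -/
def assocRel {Q : Type*} [Mul Q] (x y : Q) : Prop :=
  ∀ r : Q → Q → Prop, Equivalence r →
    (∀ a b c d, r a b → r c d → r (a * c) (b * d)) →
    (∀ a b c, r ((a * b) * c) (a * (b * c))) →
    r x y

/-- The smallest congruence on `Q` whose quotient is an abelian group; its
class of `1` is the derived subloop `Q'`, and its classes are the cosets of `Q'`. -/
def commRel {Q : Type*} [Mul Q] (x y : Q) : Prop :=
  ∀ r : Q → Q → Prop, Equivalence r →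
    (∀ a b c d, r a b → r c d → r (a * c) (b * d)) →
    (∀ a b c, r ((a * b) * c) (a * (b * c))) →
    (∀ a b, r (a * b) (b * a)) →
    r x y

/-- A congruence on the loop `Q`; normal subloops of `Q` are exactly the
congruence classes of `1`, and `Q/N` is the corresponding quotient. -/
structure LoopCongruence (Q : Type*) [Mul Q] where
  r : Q → Q → Prop
  iseqv : Equivalence r
  mul_compat : ∀ a b c d, r a b → r c d → r (a * c) (b * d)

def LoopCongruence.toSetoid {Q : Type*} [Mul Q] (c : LoopCongruence Q) : Setoid Q :=
  ⟨c.r, c.iseqv⟩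

instance LoopCongruence.quotMul {Q : Type*} [Mul Q] (c : LoopCongruence Q) :
    Mul (Quotient c.toSetoid) :=
  ⟨Quotient.map₂ (· * ·) fun _ _ h₁ _ _ h₂ => c.mul_compat _ _ _ _ h₁ h₂⟩

-- all classes have the same cardinality
lemma class_card_le {Q : Type*} [Loop Q] [Fintype Q] (c : LoopCongruence Q) (a d : Q) :
    Nat.card {x : Q // c.r x a} ≤ Nat.card {x : Q // c.r x d} := by
  obtain ⟨t, ht⟩ := (Loop.mulLeft_bijective a).2 d
  refine Nat.card_le_card_of_injective
    (fun x => ⟨x.1 * t, ?_⟩) ?_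
  · have := c.mul_compat _ _ _ _ x.2 (c.iseqv.refl t)
    simpa [ht] using this
  · intro x y hxy
    have := (Loop.mulRight_bijective t).1 (congrArg Subtype.val hxy)
    exact Subtype.ext this

lemma class_card_eq {Q : Type*} [Loop Q] [Fintype Q] (c : LoopCongruence Q) (a d : Q) :
    Nat.card {x : Q // c.r x a} = Nat.card {x : Q // c.r x d} :=
  le_antisymm (class_card_le c a d) (class_card_le c d a)

-- splitting a map equation
lemma map_split {Q Q' : Type*} (f : Q → Q') :
    ∀ (s₁ : Multiset Q') {s₂ : Multiset Q'} {t : Multiset Q},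
      t.map f = s₁ + s₂ → ∃ t₁ t₂, t = t₁ + t₂ ∧ t₁.map f = s₁ ∧ t₂.map f = s₂ := by
  classical
  intro s₁
  induction s₁ using Multiset.induction_on with
  | empty => intro s₂ t h; exact ⟨0, t, by simp, by simp, by simpa using h⟩
  | cons a s₁ ih =>
    intro s₂ t h
    have ha : a ∈ t.map f := by rw [h]; simp
    obtain ⟨x, hx, hfx⟩ := Multiset.mem_map.mp ha
    have htx : t = x ::ₘ t.erase x := (Multiset.cons_erase hx).symm
    have h2 : (t.erase x).map f = s₁ + s₂ := by
      have : f x ::ₘ (t.erase x).map f = a ::ₘ (s₁ + s₂) := by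
        rw [← Multiset.map_cons, ← htx, h, Multiset.cons_add]
      rw [hfx] at this
      exact (Multiset.cons_inj_right a).mp this
    obtain ⟨t₁, t₂, he, h₁, h₂⟩ := ih h2
    exact ⟨x ::ₘ t₁, t₂, by rw [htx, he, Multiset.cons_add], by simp [h₁, hfx], h₂⟩

-- lifting a product expression from the quotient
lemma lift_prod {Q : Type*} [Mul Q] (c : LoopCongruence Q)
    {s : Multiset (Quotient c.toSetoid)} {v : Quotient c.toSetoid}
    (h : IsProdOf s v) :
    ∀ t : Multiset Q, t.map (Quotient.mk c.toSetoid) = s →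
      ∃ x : Q, IsProdOf t x ∧ Quotient.mk c.toSetoid x = v := by
  induction h with
  | single a =>
    intro t ht
    obtain ⟨x, rfl, hx⟩ := Multiset.map_eq_singleton.mp ht
    exact ⟨x, IsProdOf.single x, hx⟩
  | mul h1 h2 ih1 ih2 =>
    intro t ht
    obtain ⟨t₁, t₂, rfl, ht₁, ht₂⟩ := map_split _ _ ht
    obtain ⟨x₁, hx₁, hq₁⟩ := ih1 t₁ ht₁
    obtain ⟨x₂, hx₂, hq₂⟩ := ih2 t₂ ht₂
    exact ⟨x₁ * x₂, hx₁.mul hx₂, by rw [← hq₁, ← hq₂]; rfl⟩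

-- composing product expressions
lemma prod_of_prods {Q : Type*} [Mul Q] {s : Multiset Q} {v : Q}
    (h : IsProdOf s v) (u : Multiset Q) (hu : ∀ a ∈ s, IsProdOf u a) :
    IsProdOf (Multiset.card s • u) v := by
  induction h with
  | single a => simpa using hu a (by simp)
  | @mul s t a b h1 h2 ih1 ih2 =>
    have := (ih1 fun a ha => hu a (by simp [ha])).mul (ih2 fun a ha => hu a (by simp [ha]))
    simpa [add_smul] using this

theorem fullProds_intersects_quotient_prods (Q : Type*) [Loop Q] [Fintype Q]
    (c : LoopCongruence Q) [Fintype (Quotient c.toSetoid)] (k : ℕ)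
    (hcard : Nat.card {x : Q // c.r x 1} = k)
    (b : Fin k → Quotient c.toSetoid)
    (hb : ∀ i, b i ∈ fullProds (Quotient c.toSetoid) 1)
    (v : Quotient c.toSetoid)
    (hv : IsProdOf (↑(List.ofFn b) : Multiset (Quotient c.toSetoid)) v) :
    ∃ x : Q, x ∈ fullProds Q 1 ∧ Quotient.mk c.toSetoid x = v := by
  classical
  -- Step 1: v is a product of k copies of univ (Q/N)
  have hcomp : IsProdOf (k • (Finset.univ : Finset (Quotient c.toSetoid)).val) v := by
    have h := prod_of_prods hv (Finset.univ : Finset (Quotient c.toSetoid)).val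
      (fun a ha => ?_)
    · simpa using h
    · obtain ⟨i, rfl⟩ := Set.mem_range.mp ((List.mem_ofFn' b a).mp (by simpa using ha))
      simpa [fullProds] using hb i
  -- Step 2: the multiset of classes of all elements of Q is k • univ
  have hmap : (Finset.univ : Finset Q).val.map (Quotient.mk c.toSetoid)
      = k • (Finset.univ : Finset (Quotient c.toSetoid)).val := by
    ext C
    rw [Multiset.count_nsmul, Multiset.count_univ, mul_one, Multiset.count_map]
    obtain ⟨a, rfl⟩ := Quotient.exists_rep C
    have hiff : ∀ x : Q, (Quotient.mk c.toSetoid a = Quotient.mk c.toSetoid x)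
        ↔ c.r x a := by
      intro x
      constructor
      · intro h; exact Quotient.exact h.symm
      · intro h; exact (Quotient.sound h).symm
    calc Multiset.card
          (Multiset.filter (fun x => Quotient.mk c.toSetoid a = Quotient.mk c.toSetoid x)
            (Finset.univ : Finset Q).val)
        = (Finset.filter (fun x => Quotient.mk c.toSetoid a = Quotient.mk c.toSetoid x)
            Finset.univ).card := rfl
      _ = Fintype.card {x : Q // Quotient.mk c.toSetoid a = Quotient.mk c.toSetoid x} :=
            (Fintype.card_subtype _).symm
      _ = Nat.card {x : Q // Quotient.mk c.toSetoid a = Quotient.mk c.toSetoid x} :=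
            (Nat.card_eq_fintype_card).symm
      _ = Nat.card {x : Q // c.r x a} := Nat.card_congr (Equiv.subtypeEquivRight hiff)
      _ = Nat.card {x : Q // c.r x 1} := class_card_eq c a 1
      _ = k := hcard
  -- Step 3: lift
  obtain ⟨x, hx, hxv⟩ := lift_prod c hcomp (Finset.univ : Finset Q).val hmap
  exact ⟨x, by simpa [fullProds] using hx, hxv⟩
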